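/- Pointwise on the underlying probability space, sup_{v∈[0,1/2]} |ỹ(v)| ≤ max{πU₁, πU₂ + 1}·B + sup_{v∈[0,1/2]} |ε̃(v)|. -/

import Mathlib

open MeasureTheory ProbabilityTheory Complex Real

/-- `A_m := sup{ |sin(πν)|/(πν) : ν ∈ [m, m+1] }`. -/
noncomputable def sideLobeBound (m : ℕ) : ℝ :=
  ⨆ ν ∈ Set.Icc (m : ℝ) ((m : ℝ) + 1), |Real.sin (Real.pi * ν)| / (Real.pi * ν)

/-- `U₁ := Σ_{j=0}^{⌊(n−2g−1)/(4g)⌋} A_{(2j+1)g}`. -/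
noncomputable def leakageU₁ (n g : ℕ) : ℝ :=
  ∑ j ∈ Finset.Icc (0 : ℤ) ⌊((n : ℝ) - 2 * g - 1) / (4 * g)⌋,
    sideLobeBound ((2 * j + 1).toNat * g)

/-- `U₂ := Σ_{j=1}^{⌊(n−1)/(4g)⌋} A_{2jg−1}`. -/
noncomputable def leakageU₂ (n g : ℕ) : ℝ :=
  ∑ j ∈ Finset.Icc (1 : ℤ) ⌊((n : ℝ) - 1) / (4 * g)⌋,
    sideLobeBound ((2 * j).toNat * g - 1)

namespace PSUB

noncomputable def Dk (n : ℕ) (x : ℝ) : ℂ :=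
  (1 / (n : ℂ)) * ∑ t ∈ Finset.range n, Complex.exp (2 * Real.pi * Complex.I * x * (t + 1))

lemma abs_Dk_le_one {n : ℕ} (hn : 0 < n) (x : ℝ) : ‖Dk n x‖ ≤ 1 := by
  have hterm : ∀ t : ℕ, ‖Complex.exp (2 * Real.pi * Complex.I * x * (t + 1))‖ = 1 := by
    intro t
    have : (2 * (Real.pi : ℂ) * Complex.I * x * (t + 1))
        = ((2 * Real.pi * x * (t + 1) : ℝ) : ℂ) * Complex.I := by push_cast; ring
    rw [this, Complex.norm_exp_ofReal_mul_I]
  have hsum : ‖∑ t ∈ Finset.range n,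
      Complex.exp (2 * Real.pi * Complex.I * x * (t + 1))‖ ≤ n := by
    calc ‖∑ t ∈ Finset.range n, Complex.exp (2 * Real.pi * Complex.I * x * (t + 1))‖
        ≤ ∑ t ∈ Finset.range n,
            ‖Complex.exp (2 * Real.pi * Complex.I * x * (t + 1))‖ :=
          norm_sum_le _ _
      _ = ∑ t ∈ Finset.range n, (1:ℝ) := by simp [hterm]
      _ = n := by simp
  have hn' : (0:ℝ) < n := by exact_mod_cast hn
  unfold Dk
  rw [norm_mul]
  have h1 : ‖1 / (n : ℂ)‖ = 1 / (n : ℝ) := by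
    rw [norm_div]; simp
  rw [h1]
  rw [div_mul_eq_mul_div, one_mul, div_le_one hn']
  exact hsum

lemma Dk_neg (n : ℕ) (x : ℝ) : Dk n (-x) = (starRingEnd ℂ) (Dk n x) := by
  unfold Dk
  rw [map_mul, map_sum]
  congr 1
  · simp
  · refine Finset.sum_congr rfl fun t _ => ?_
    rw [← Complex.exp_conj]
    congr 1
    simp only [map_mul, map_add, Complex.conj_I, map_ofNat, Complex.conj_ofReal, map_one,
      Complex.conj_natCast]
    push_cast
    ring

lemma abs_Dk_neg (n : ℕ) (x : ℝ) : ‖Dk n (-x)‖ = ‖Dk n x‖ := by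
  rw [Dk_neg, Complex.norm_conj]

lemma Dk_add_int (n : ℕ) (x : ℝ) (m : ℤ) : Dk n (x + m) = Dk n x := by
  unfold Dk
  congr 1
  refine Finset.sum_congr rfl fun t _ => ?_
  have h : (2 * (Real.pi : ℂ) * Complex.I * ((x : ℝ) + (m:ℤ) : ℝ) * (t + 1))
      = 2 * Real.pi * Complex.I * x * (t + 1) + ((m * (t + 1) : ℤ) : ℂ) * (2 * Real.pi * Complex.I) := by
    push_cast; ring
  rw [h, Complex.exp_add, Complex.exp_int_mul_two_pi_mul_I, mul_one]

lemma abs_exp_I_sub_one (θ : ℝ) :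
    ‖Complex.exp ((θ : ℂ) * Complex.I) - 1‖ = 2 * |Real.sin (θ / 2)| := by
  have e1 : Complex.exp ((θ : ℂ) * Complex.I)
      = Complex.exp (((θ/2 : ℝ) : ℂ) * Complex.I) * Complex.exp (((θ/2 : ℝ) : ℂ) * Complex.I) := by
    rw [← Complex.exp_add]; congr 1; push_cast; ring
  have e2 : (1 : ℂ) = Complex.exp (((θ/2 : ℝ) : ℂ) * Complex.I)
      * Complex.exp (((-(θ/2) : ℝ) : ℂ) * Complex.I) := by
    rw [← Complex.exp_add]
    norm_num
  have e3 : Complex.exp (((θ/2 : ℝ) : ℂ) * Complex.I) - Complex.exp (((-(θ/2) : ℝ) : ℂ) * Complex.I)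
      = 2 * (Real.sin (θ/2) : ℂ) * Complex.I := by
    rw [Complex.exp_mul_I, Complex.exp_mul_I, Complex.ofReal_neg, Complex.cos_neg,
      Complex.sin_neg, Complex.ofReal_sin]
    ring
  rw [e1]
  conv_lhs => rw [e2]
  rw [show ∀ a b c : ℂ, a * b - a * c = a * (b - c) from fun a b c => by ring, e3]
  rw [norm_mul, norm_mul, norm_mul, Complex.norm_exp_ofReal_mul_I, Complex.norm_I,
    Complex.norm_real, Real.norm_eq_abs, Complex.norm_two]
  ring


lemma abs_Dk_le {n : ℕ} (hn : 0 < n) {x : ℝ} (hx0 : 0 < x) (hx : x ≤ 1/2) :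
    ‖Dk n x‖ ≤ Real.pi / 2 * (|Real.sin (Real.pi * ((n:ℝ) * x))| / (Real.pi * ((n:ℝ) * x))) := by
  have hn' : (0:ℝ) < n := by exact_mod_cast hn
  set z := Complex.exp (2 * (Real.pi : ℂ) * Complex.I * x) with hz
  have hzne : z ≠ 1 := by
    intro h
    obtain ⟨k, hk⟩ := Complex.exp_eq_one_iff.mp h
    have h2 : ((x : ℂ) - (k : ℂ)) * (2 * Real.pi * Complex.I) = 0 := by
      linear_combination hk
    have hne : (2 * (Real.pi:ℂ) * Complex.I) ≠ 0 := by
      simp [Complex.ext_iff, Real.pi_ne_zero]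
    have h3 : (x : ℂ) = (k : ℂ) := by
      rcases mul_eq_zero.mp h2 with h | h
      · exact sub_eq_zero.mp h
      · exact absurd h hne
    have h4 : x = (k : ℝ) := by exact_mod_cast h3
    have hk0 : 0 < (k:ℝ) := h4 ▸ hx0
    have hk1 : (1:ℤ) ≤ k := by exact_mod_cast hk0
    have : (1:ℝ) ≤ (k:ℝ) := by exact_mod_cast hk1
    linarith
  have hterm : ∀ t : ℕ, Complex.exp (2 * (Real.pi:ℂ) * Complex.I * x * (t + 1)) = z ^ (t+1) := by
    intro t
    rw [hz, ← Complex.exp_nat_mul]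
    congr 1
    push_cast; ring
  have hsum : ∑ t ∈ Finset.range n, Complex.exp (2 * (Real.pi:ℂ) * Complex.I * x * (t + 1))
      = z * ((z ^ n - 1) / (z - 1)) := by
    rw [← geom_sum_eq hzne n, Finset.mul_sum]
    refine Finset.sum_congr rfl fun t _ => ?_
    rw [hterm t, pow_succ, mul_comm]
  have habsz : ‖z‖ = 1 := by
    rw [hz, show (2 * (Real.pi:ℂ) * Complex.I * x) = ((2*Real.pi*x : ℝ):ℂ) * Complex.I by push_cast; ring,
      Complex.norm_exp_ofReal_mul_I]
  have hzn : z ^ n = Complex.exp (((2*Real.pi*((n:ℝ)*x) : ℝ):ℂ) * Complex.I) := by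
    rw [hz, ← Complex.exp_nat_mul]
    congr 1
    push_cast; ring
  have habs1 : ‖z ^ n - 1‖ = 2 * |Real.sin (Real.pi * ((n:ℝ)*x))| := by
    rw [hzn, abs_exp_I_sub_one]
    congr 2
    ring
  have habs2 : ‖z - 1‖ = 2 * Real.sin (Real.pi * x) := by
    have := abs_exp_I_sub_one (2*Real.pi*x)
    rw [hz, show (2 * (Real.pi:ℂ) * Complex.I * x) = ((2*Real.pi*x : ℝ):ℂ) * Complex.I by push_cast; ring]
    rw [this, show (2*Real.pi*x/2) = Real.pi * x by ring]
    rw [_root_.abs_of_nonneg (Real.sin_nonneg_of_nonneg_of_le_pi (by positivity)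
      (by nlinarith [Real.pi_pos]))]
  have hpi := Real.pi_pos
  have hsin_lb : 2 * x ≤ Real.sin (Real.pi * x) := by
    have h := Real.mul_le_sin (x := Real.pi * x) (by positivity) (by nlinarith)
    have : 2 / Real.pi * (Real.pi * x) = 2 * x := by field_simp
    linarith [this ▸ h]
  have hsin_pos : 0 < Real.sin (Real.pi * x) := by linarith
  have habsDk : ‖Dk n x‖
      = |Real.sin (Real.pi * ((n:ℝ)*x))| / ((n:ℝ) * Real.sin (Real.pi * x)) := by
    unfold Dk
    rw [hsum, norm_mul, norm_mul, norm_div, norm_div, norm_one, habsz, habs1, habs2,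
      Complex.norm_natCast]
    rw [eq_div_iff (by positivity)]
    field_simp
  rw [habsDk]
  have hgoal_eq : Real.pi / 2 * (|Real.sin (Real.pi * ((n:ℝ) * x))| / (Real.pi * ((n:ℝ) * x)))
      = |Real.sin (Real.pi * ((n:ℝ)*x))| / ((n:ℝ) * (2*x)) := by
    rw [eq_div_iff (by positivity)]
    field_simp
  rw [hgoal_eq]
  apply div_le_div_of_nonneg_left (abs_nonneg _) (by positivity)
  nlinarith

lemma sideLobe_nonneg (m : ℕ) : 0 ≤ sideLobeBound m := by
  unfold sideLobeBound
  refine Real.iSup_nonneg fun ν => Real.iSup_nonneg fun h => ?_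
  have : 0 ≤ ν := le_trans (by positivity) h.1
  positivity

lemma le_sideLobe_of_mem {m : ℕ} (hm : 1 ≤ m) {ν : ℝ} (h1 : (m:ℝ) ≤ ν) (h2 : ν ≤ (m:ℝ) + 1) :
    |Real.sin (Real.pi * ν)| / (Real.pi * ν) ≤ sideLobeBound m := by
  have hm1 : (1:ℝ) ≤ (m:ℝ) := by exact_mod_cast hm
  have hpi := Real.pi_gt_three
  have hbdd : BddAbove (Set.range fun ν' : ℝ =>
      ⨆ _ : ν' ∈ Set.Icc (m : ℝ) ((m : ℝ) + 1), |Real.sin (Real.pi * ν')| / (Real.pi * ν')) := by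
    refine ⟨1, ?_⟩
    rintro y ⟨ν', rfl⟩
    refine Real.iSup_le (fun h => ?_) zero_le_one
    have hν1 : (1:ℝ) ≤ Real.pi * ν' := by nlinarith [h.1]
    calc |Real.sin (Real.pi * ν')| / (Real.pi * ν') ≤ 1 / (Real.pi * ν') := by
          rw [div_le_div_iff_of_pos_right (by linarith)]
          exact Real.abs_sin_le_one _
      _ ≤ 1 := by rw [div_le_one (by linarith)]; linarith
  calc |Real.sin (Real.pi * ν)| / (Real.pi * ν)
      = ⨆ _ : ν ∈ Set.Icc (m : ℝ) ((m : ℝ) + 1), |Real.sin (Real.pi * ν)| / (Real.pi * ν) :=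
        (ciSup_pos (f := fun _ => |Real.sin (Real.pi * ν)| / (Real.pi * ν)) (Set.mem_Icc.mpr ⟨h1, h2⟩)).symm
    _ ≤ sideLobeBound m := le_ciSup hbdd ν

lemma f_le_A {m : ℕ} (hm : 1 ≤ m) {ν : ℝ} (hν : (m:ℝ) ≤ ν) :
    |Real.sin (Real.pi * ν)| / (Real.pi * ν) ≤ sideLobeBound m := by
  have hm1 : (1:ℝ) ≤ (m:ℝ) := by exact_mod_cast hm
  have hpi := Real.pi_gt_three
  rcases le_or_gt ν ((m:ℝ) + 1) with h | h
  · exact le_sideLobe_of_mem hm hν h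
  · have hkey : |Real.sin (Real.pi * ((m:ℝ) + 1/2))| / (Real.pi * ((m:ℝ) + 1/2))
        = 1 / (Real.pi * ((m:ℝ) + 1/2)) := by
      congr 1
      have hsin0 : Real.sin ((m:ℝ) * Real.pi) = 0 := Real.sin_nat_mul_pi m
      have : Real.pi * ((m:ℝ) + 1/2) = (m:ℝ) * Real.pi + Real.pi / 2 := by ring
      rw [this, Real.sin_add_pi_div_two]
      exact_mod_cast Real.abs_cos_int_mul_pi m
    calc |Real.sin (Real.pi * ν)| / (Real.pi * ν) ≤ 1 / (Real.pi * ν) := by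
          rw [div_le_div_iff_of_pos_right (by nlinarith)]
          exact Real.abs_sin_le_one _
      _ ≤ 1 / (Real.pi * ((m:ℝ) + 1/2)) := by
          apply one_div_le_one_div_of_le (by nlinarith) (by nlinarith)
      _ = |Real.sin (Real.pi * ((m:ℝ) + 1/2))| / (Real.pi * ((m:ℝ) + 1/2)) := hkey.symm
      _ ≤ sideLobeBound m := le_sideLobe_of_mem hm (by linarith) (by linarith)

lemma Dk_le_sideLobe {n m : ℕ} (hnpos : 0 < n) {x : ℝ} (hx0 : 0 < x) (hx : x ≤ 1/2)
    (hm : 1 ≤ m) (hν : (m:ℝ) ≤ (n:ℝ) * x) :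
    ‖Dk n x‖ ≤ Real.pi / 2 * sideLobeBound m :=
  (abs_Dk_le hnpos hx0 hx).trans
    (mul_le_mul_of_nonneg_left (f_le_A hm hν) (by positivity))

lemma Dk_le_inv {n : ℕ} (hnpos : 0 < n) {x : ℝ} (hx0 : 0 < x) (hx : x ≤ 1/2) :
    ‖Dk n x‖ ≤ 1 / (2 * ((n:ℝ) * x)) := by
  have hn' : (0:ℝ) < n := by exact_mod_cast hnpos
  have hν : (0:ℝ) < (n:ℝ) * x := by positivity
  refine (abs_Dk_le hnpos hx0 hx).trans ?_
  have h1 : |Real.sin (Real.pi * ((n:ℝ) * x))| / (Real.pi * ((n:ℝ) * x))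
      ≤ 1 / (Real.pi * ((n:ℝ) * x)) := by
    rw [div_le_div_iff_of_pos_right (by positivity)]
    exact Real.abs_sin_le_one _
  refine le_trans (mul_le_mul_of_nonneg_left h1 (by positivity)) (le_of_eq ?_)
  field_simp

lemma sum_sideLobe_le (n g : ℕ) (S : Finset ℕ) (φ : ℕ → ℤ)
    (hinj : ∀ a ∈ S, ∀ b ∈ S, φ a = φ b → a = b)
    (hmem : ∀ k ∈ S, φ k ∈ Finset.Icc (1:ℤ) ⌊((n:ℝ) - 1) / (4 * (g:ℝ))⌋) :
    ∑ k ∈ S, sideLobeBound ((2 * φ k).toNat * g - 1) ≤ leakageU₂ n g := by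
  have himg : ∑ j ∈ S.image φ, sideLobeBound ((2 * j).toNat * g - 1)
      = ∑ k ∈ S, sideLobeBound ((2 * φ k).toNat * g - 1) := Finset.sum_image hinj
  rw [← himg]
  refine Finset.sum_le_sum_of_subset_of_nonneg ?_ (fun _ _ _ => sideLobe_nonneg _)
  intro j hj
  obtain ⟨k, hk, rfl⟩ := Finset.mem_image.mp hj
  exact hmem k hk

set_option maxHeartbeats 4000000 in
lemma sum_Dk_le {n g T : ℕ} (hg : 2 ≤ g) (hT : 1 ≤ T) (hn : 2 * g * T + 1 ≤ n)
    {s : ℝ} (hs0 : 0 ≤ s) (hs : s ≤ 1 / (2 * (T:ℝ))) :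
    ∑ k ∈ Finset.range T, ‖Dk n ((k:ℝ) / (T:ℝ) - s)‖
      ≤ Real.pi * leakageU₂ n g + 1 := by
  have hπ := Real.pi_pos
  have hnpos : 0 < n := by omega
  have hN : (0:ℝ) < n := by exact_mod_cast hnpos
  have hTr : (0:ℝ) < T := by exact_mod_cast hT
  have hgr : (2:ℝ) ≤ g := by exact_mod_cast hg
  have hNge : 2 * (g:ℝ) * T + 1 ≤ (n:ℝ) := by exact_mod_cast hn
  have hU2 : 0 ≤ leakageU₂ n g := Finset.sum_nonneg fun j _ => sideLobe_nonneg _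
  rw [le_div_iff₀ (by positivity)] at hs
  have hsT : s * T ≤ 1/2 := by nlinarith
  rcases eq_or_lt_of_le hT with hT1 | hT2
  · -- T = 1
    have hT1' : T = 1 := hT1.symm
    subst hT1'
    rw [Finset.sum_range_one]
    refine le_trans (abs_Dk_le_one hnpos _) ?_
    nlinarith [mul_nonneg hπ.le hU2]
  -- now 1 < T
  have hT2r : (2:ℝ) ≤ T := by exact_mod_cast hT2
  set J : ℤ := ⌊((n:ℝ) - 1) / (4 * (g:ℝ))⌋ with hJ
  have hJmem : ∀ j : ℤ, 1 ≤ j → (4 * (j:ℝ) * g ≤ (n:ℝ) - 1) → j ∈ Finset.Icc (1:ℤ) J := by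
    intro j h1 h2
    rw [Finset.mem_Icc]
    refine ⟨h1, Int.le_floor.mpr ?_⟩
    rw [le_div_iff₀ (by positivity)]
    nlinarith
  set F : ℕ → ℝ := fun k => ‖Dk n ((k:ℝ) / (T:ℝ) - s)‖ with hF
  classical
  have hsplit := Finset.sum_filter_add_sum_filter_not (Finset.range T)
    (fun k : ℕ => ((k:ℝ)/(T:ℝ) - s ≤ 1/2)) F
  set M := (Finset.range T).filter (fun k : ℕ => ((k:ℝ)/(T:ℝ) - s ≤ 1/2)) with hM
  set P := (Finset.range T).filter (fun k : ℕ => ¬((k:ℝ)/(T:ℝ) - s ≤ 1/2)) with hP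
  -- the plus family
  have hPle : ∑ k ∈ P, F k ≤ Real.pi / 2 * leakageU₂ n g := by
    have hterm : ∀ k ∈ P,
        F k ≤ Real.pi / 2 * sideLobeBound ((2 * (((T - k : ℕ):ℤ))).toNat * g - 1)
          ∧ (((T - k : ℕ):ℤ)) ∈ Finset.Icc (1:ℤ) J := by
      intro k hk
      obtain ⟨hkR, hkc⟩ := Finset.mem_filter.mp hk
      have hkT : k < T := Finset.mem_range.mp hkR
      push_neg at hkc
      have hk1 : 1 ≤ k := by
        rcases Nat.eq_zero_or_pos k with rfl | h
        · exfalso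
          simp only [Nat.cast_zero, zero_div] at hkc
          linarith
        · exact h
      have hkTr : (k:ℝ) + 1 ≤ T := by exact_mod_cast hkT
      have hkcast : ((T - k : ℕ):ℝ) = (T:ℝ) - k := by
        push_cast [Nat.cast_sub hkT.le]
        ring
      set x : ℝ := (k:ℝ)/T - s with hx
      have hx1 : x < 1 := by
        have h1 : (k:ℝ)/T < 1 := (div_lt_one hTr).mpr (by linarith)
        simp only [hx]; linarith
      set δ : ℝ := 1 - x with hδ
      have hδ0 : 0 < δ := by simp only [hδ]; linarith
      have hδh : δ < 1/2 := by simp only [hδ]; linarith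
      have hDx : F k = ‖Dk n δ‖ := by
        simp only [hF]
        have h1 : Dk n ((k:ℝ)/T - s) = Dk n (((k:ℝ)/T - s) - 1) := by
          rw [← Dk_add_int n (((k:ℝ)/T - s) - 1) 1]
          norm_num
        rw [h1, show ((k:ℝ)/T - s) - 1 = -δ by simp only [hδ, hx]; ring, abs_Dk_neg]
      have hδT : δ * T = (T:ℝ) - k + s * T := by
        simp only [hδ, hx]
        field_simp
        ring
      have hsT0 : 0 ≤ s * T := mul_nonneg hs0 hTr.le
      have hδTk : (T:ℝ) - k ≤ δ * T := by linarith
      have h2g : 2*(g:ℝ)*((T:ℝ) - k) ≤ (n:ℝ) * δ := by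
        have e1 := mul_le_mul_of_nonneg_left hδTk (show (0:ℝ) ≤ 2*g by positivity)
        have e2 := mul_le_mul_of_nonneg_right (show 2*(g:ℝ)*T ≤ n by linarith) hδ0.le
        nlinarith [e1, e2]
      have hm4 : 4 ≤ 2*(T-k)*g := by
        have h1 : 1 ≤ T - k := by omega
        calc 4 = 2*1*2 := by norm_num
          _ ≤ 2*(T-k)*g := Nat.mul_le_mul (Nat.mul_le_mul_left 2 h1) hg
      have hmcast : ((2*(T-k)*g - 1 : ℕ):ℝ) = 2*((T:ℝ)-k)*g - 1 := by
        push_cast [Nat.cast_sub (by omega : 1 ≤ 2*(T-k)*g), Nat.cast_sub hkT.le]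
        ring
      have hν : ((2*(T-k)*g - 1 : ℕ):ℝ) ≤ (n:ℝ) * δ := by
        rw [hmcast]
        linarith
      have hb : F k ≤ Real.pi/2 * sideLobeBound (2*(T-k)*g - 1) := by
        rw [hDx]
        exact Dk_le_sideLobe hnpos hδ0 hδh.le (by omega) hν
      have htn : (2 * (((T - k : ℕ):ℤ))).toNat * g - 1 = 2*(T-k)*g - 1 := by
        have : (2 * (((T - k : ℕ):ℤ))).toNat = 2*(T-k) := by omega
        rw [this]
      have hrange : (((T - k : ℕ):ℤ)) ∈ Finset.Icc (1:ℤ) J := by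
        apply hJmem _ (by omega)
        have hlt : 4*(g:ℝ)*((T:ℝ)-k) < (n:ℝ) := by
          nlinarith [h2g, mul_lt_mul_of_pos_left hδh hN]
        have hlt' : 4*g*(T-k) < n := by
          have : ((4*g*(T-k) : ℕ):ℝ) < (n:ℝ) := by
            push_cast [Nat.cast_sub hkT.le]
            nlinarith [hlt]
          exact_mod_cast this
        have h4 : 4*g*(T-k) + 1 ≤ n := hlt'
        have h4r : 4*(g:ℝ)*((T:ℝ)-k) + 1 ≤ (n:ℝ) := by
          have : ((4*g*(T-k) + 1 : ℕ):ℝ) ≤ (n:ℝ) := by exact_mod_cast h4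
          push_cast [Nat.cast_sub hkT.le] at this
          nlinarith
        push_cast [Nat.cast_sub hkT.le]
        nlinarith
      exact ⟨by rw [htn]; exact hb, hrange⟩
    calc ∑ k ∈ P, F k
        ≤ ∑ k ∈ P, (Real.pi/2 * sideLobeBound ((2 * (((T - k : ℕ):ℤ))).toNat * g - 1)) :=
          Finset.sum_le_sum (fun k hk => (hterm k hk).1)
      _ = Real.pi/2 * ∑ k ∈ P, sideLobeBound ((2 * (((T - k : ℕ):ℤ))).toNat * g - 1) := by
          rw [Finset.mul_sum]
      _ ≤ Real.pi/2 * leakageU₂ n g := by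
          refine mul_le_mul_of_nonneg_left ?_ (by positivity)
          refine sum_sideLobe_le n g P (fun k => ((T - k : ℕ):ℤ)) ?_
            (fun k hk => (hterm k hk).2)
          intro a ha b hb hab
          have haT : a < T := Finset.mem_range.mp (Finset.mem_filter.mp ha).1
          have hbT : b < T := Finset.mem_range.mp (Finset.mem_filter.mp hb).1
          have hab2 : ((T - a : ℕ):ℤ) = ((T - b : ℕ):ℤ) := hab
          omega
  have h0M : 0 ∈ M := by
    refine Finset.mem_filter.mpr ⟨Finset.mem_range.mpr (by omega), ?_⟩
    show ((0:ℕ):ℝ)/(T:ℝ) - s ≤ 1/2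
    have h00 : ((0:ℕ):ℝ)/(T:ℝ) = 0 := by norm_num
    rw [h00]
    linarith
  -- minus family
  rcases le_or_gt ((n:ℝ)*s) 1 with hcs | hcs
  · -- Case B : n*s ≤ 1
    have hMle : ∑ k ∈ M, F k ≤ 1 + Real.pi/2 * leakageU₂ n g := by
      rw [← Finset.add_sum_erase M F h0M]
      have h0b : F 0 ≤ 1 := abs_Dk_le_one hnpos _
      have hterm : ∀ k ∈ M.erase 0,
          F k ≤ Real.pi/2 * sideLobeBound ((2 * ((k:ℕ):ℤ)).toNat * g - 1)
            ∧ ((k:ℕ):ℤ) ∈ Finset.Icc (1:ℤ) J := by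
        intro k hk
        obtain ⟨hk0, hkM⟩ := Finset.mem_erase.mp hk
        obtain ⟨hkR, hkc⟩ := Finset.mem_filter.mp hkM
        have hkT : k < T := Finset.mem_range.mp hkR
        have hk1 : 1 ≤ k := Nat.one_le_iff_ne_zero.mpr hk0
        have hk1r : (1:ℝ) ≤ k := by exact_mod_cast hk1
        set x : ℝ := (k:ℝ)/T - s with hx
        have hxT : x * T = (k:ℝ) - s*T := by
          rw [hx]
          field_simp
        have hx0 : 0 < x := by
          have h1 : 0 < x * T := by rw [hxT]; linarith
          have h2 : x = x*T/T := by field_simp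
          rw [h2]; exact div_pos h1 hTr
        have hm4 : 4 ≤ 2*k*g := by
          calc 4 = 2*1*2 := by norm_num
            _ ≤ 2*k*g := Nat.mul_le_mul (Nat.mul_le_mul_left 2 hk1) hg
        have hmcast : ((2*k*g - 1 : ℕ):ℝ) = 2*(k:ℝ)*g - 1 := by
          push_cast [Nat.cast_sub (by omega : 1 ≤ 2*k*g)]
          ring
        have hν : ((2*k*g - 1 : ℕ):ℝ) ≤ (n:ℝ) * x := by
          rw [hmcast]
          have key : (2*(k:ℝ)*g - 1) * T ≤ ((n:ℝ)*x) * T := by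
            have e1 : ((n:ℝ)*x)*T = (n:ℝ)*k - (n:ℝ)*(s*T) := by
              rw [mul_assoc, hxT]; ring
            have e2 : (n:ℝ)*(s*T) ≤ T := by
              nlinarith [mul_le_mul_of_nonneg_right hcs hTr.le]
            have e3 : (2*(g:ℝ)*T + 1)*(k:ℝ) ≤ (n:ℝ)*k := by
              nlinarith [mul_le_mul_of_nonneg_right hNge (show (0:ℝ) ≤ (k:ℝ) by positivity)]
            nlinarith [e1, e2, e3]
          exact le_of_mul_le_mul_right key hTr
        have hb : F k ≤ Real.pi/2 * sideLobeBound (2*k*g - 1) :=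
          Dk_le_sideLobe hnpos hx0 hkc (by omega) hν
        have h2k : 2*k ≤ T := by
          have hc2 : (k:ℝ) ≤ T/2 + s*T := by
            have h1 : (k:ℝ)/T ≤ 1/2 + s := by
              have h0 := hkc
              rw [hx] at h0
              linarith
            rw [div_le_iff₀ hTr] at h1
            nlinarith
          have h4T : 4*(T:ℝ) + 1 ≤ n := by
            nlinarith [mul_le_mul_of_nonneg_right hgr hTr.le]
          have hTs : 4*(s*T) ≤ 1 := by nlinarith [mul_le_mul_of_nonneg_right h4T hs0]
          have hlt : (2*(k:ℝ)) < (T:ℝ) + 1 := by nlinarith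
          have : (2*k) < T + 1 := by
            have h2 : ((2*k : ℕ):ℝ) < ((T + 1 : ℕ):ℝ) := by push_cast; nlinarith
            exact_mod_cast h2
          omega
        have h4kg : 4*k*g + 1 ≤ n := by
          calc 4*k*g + 1 = 2*g*(2*k) + 1 := by ring
            _ ≤ 2*g*T + 1 := by
                exact Nat.add_le_add_right (Nat.mul_le_mul_left _ h2k) 1
            _ ≤ n := hn
        have htn : (2 * ((k:ℕ):ℤ)).toNat * g - 1 = 2*k*g - 1 := by
          have : (2 * ((k:ℕ):ℤ)).toNat = 2*k := by omega
          rw [this]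
        refine ⟨by rw [htn]; exact hb, hJmem _ (by exact_mod_cast hk1) ?_⟩
        have hcc : ((4*k*g + 1 : ℕ):ℝ) ≤ (n:ℝ) := by exact_mod_cast h4kg
        push_cast at hcc ⊢
        linarith
      have hsum2 : ∑ k ∈ M.erase 0, F k ≤ Real.pi/2 * leakageU₂ n g := by
        calc ∑ k ∈ M.erase 0, F k
            ≤ ∑ k ∈ M.erase 0, (Real.pi/2 * sideLobeBound ((2 * ((k:ℕ):ℤ)).toNat * g - 1)) :=
              Finset.sum_le_sum (fun k hk => (hterm k hk).1)
          _ = Real.pi/2 * ∑ k ∈ M.erase 0, sideLobeBound ((2 * ((k:ℕ):ℤ)).toNat * g - 1) := by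
              rw [Finset.mul_sum]
          _ ≤ Real.pi/2 * leakageU₂ n g := by
              refine mul_le_mul_of_nonneg_left ?_ (by positivity)
              refine sum_sideLobe_le n g _ (fun k => ((k:ℕ):ℤ)) ?_
                (fun k hk => (hterm k hk).2)
              intro a _ b _ hab
              have hab2 : ((a:ℕ):ℤ) = ((b:ℕ):ℤ) := hab
              omega
      linarith
    rw [← hsplit]
    have : Real.pi * leakageU₂ n g = Real.pi/2 * leakageU₂ n g + Real.pi/2 * leakageU₂ n g := by
      ring
    linarith
  · -- Case A : 1 < n*s
    have hspos : 0 < s := by nlinarith [mul_nonneg hN.le hs0]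
    have h1M : 1 ∈ M := by
      refine Finset.mem_filter.mpr ⟨Finset.mem_range.mpr (by omega), ?_⟩
      show ((1:ℕ):ℝ)/(T:ℝ) - s ≤ 1/2
      have h11 : 1/(T:ℝ) ≤ 1/2 := by
        rw [div_le_div_iff₀ hTr (by norm_num)]
        linarith
      rw [Nat.cast_one]
      linarith
    have h1M' : (1:ℕ) ∈ M.erase 0 := Finset.mem_erase.mpr ⟨one_ne_zero, h1M⟩
    have hMle : ∑ k ∈ M, F k ≤ 1 + Real.pi/2 * leakageU₂ n g := by
      rw [← Finset.add_sum_erase M F h0M, ← Finset.add_sum_erase _ F h1M']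
      have h0b : F 0 ≤ 1/2 := by
        have e0 : ((0:ℕ):ℝ)/T - s = -s := by
          simp only [Nat.cast_zero, zero_div]; ring
        have hshalf : s ≤ 1/2 := by
          nlinarith [mul_nonneg hs0 (show (0:ℝ) ≤ (T:ℝ) - 1 by linarith)]
        have h1 : F 0 = ‖Dk n s‖ := by
          simp only [hF, e0, abs_Dk_neg]
        rw [h1]
        refine le_trans (Dk_le_inv hnpos hspos hshalf) ?_
        rw [div_le_div_iff₀ (by positivity) (by norm_num)]
        nlinarith [hcs]
      have h1b : F 1 ≤ 1/2 := by
        set x₁ : ℝ := (1:ℝ)/T - s with hx₁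
        have hx₁0 : 0 < x₁ := by
          simp only [hx₁]
          rw [sub_pos, lt_div_iff₀ hTr]
          linarith
        have hx₁h : x₁ ≤ 1/2 := by
          have := (Finset.mem_filter.mp h1M).2
          simpa only [Nat.cast_one] using this
        have hNx₁ : 1 ≤ (n:ℝ) * x₁ := by
          have hA : 1 ≤ x₁*(2*T) := by
            have e : x₁*(2*T) = 2 - s*(2*T) := by
              simp only [hx₁]
              field_simp
            rw [e]
            linarith
          have hB : (n:ℝ) * 1 ≤ (n:ℝ)*(x₁*(2*T)) := mul_le_mul_of_nonneg_left hA hN.le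
          have hC : (1:ℝ)*(2*T) ≤ ((n:ℝ)*x₁)*(2*T) := by
            nlinarith [hB, mul_nonneg (sub_nonneg.mpr hgr) hTr.le]
          exact le_of_mul_le_mul_right hC (by positivity)
        have h1e : F 1 = ‖Dk n x₁‖ := by
          simp only [hF, Nat.cast_one, hx₁]
        rw [h1e]
        refine le_trans (Dk_le_inv hnpos hx₁0 hx₁h) ?_
        rw [div_le_div_iff₀ (by positivity) (by norm_num)]
        nlinarith [hNx₁]
      have hterm : ∀ k ∈ (M.erase 0).erase 1,
          F k ≤ Real.pi/2 * sideLobeBound ((2 * (((k:ℕ):ℤ) - 1)).toNat * g - 1)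
            ∧ (((k:ℕ):ℤ) - 1) ∈ Finset.Icc (1:ℤ) J := by
        intro k hk
        obtain ⟨hk1ne, hk'⟩ := Finset.mem_erase.mp hk
        obtain ⟨hk0, hkM⟩ := Finset.mem_erase.mp hk'
        obtain ⟨hkR, hkc⟩ := Finset.mem_filter.mp hkM
        have hkT : k < T := Finset.mem_range.mp hkR
        have hk2 : 2 ≤ k := by omega
        have hk2r : (2:ℝ) ≤ k := by exact_mod_cast hk2
        set x : ℝ := (k:ℝ)/T - s with hx
        have hxT : x * T = (k:ℝ) - s*T := by
          rw [hx]
          field_simp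
        have hx0 : 0 < x := by
          have h1 : 0 < x * T := by rw [hxT]; linarith
          have h2 : x = x*T/T := by field_simp
          rw [h2]; exact div_pos h1 hTr
        have hkey : (2*(k:ℝ) - 1)*g ≤ (n:ℝ)*x := by
          have key : ((2*(k:ℝ) - 1)*g) * T ≤ ((n:ℝ)*x) * T := by
            have e1 : ((n:ℝ)*x)*T = (n:ℝ)*k - (n:ℝ)*(s*T) := by
              rw [mul_assoc, hxT]; ring
            have e2 : (n:ℝ)*(s*T) ≤ (n:ℝ)*(1/2) := mul_le_mul_of_nonneg_left hsT hN.le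
            have e3 : (2*(g:ℝ)*T + 1)*((k:ℝ) - 1/2) ≤ (n:ℝ)*((k:ℝ) - 1/2) :=
              mul_le_mul_of_nonneg_right hNge (by linarith)
            nlinarith [e1, e2, e3]
          exact le_of_mul_le_mul_right key hTr
        have hm4 : 2 ≤ 2*(k-1)*g := by
          have h1 : 1 ≤ k - 1 := by omega
          calc 2 ≤ 2*1*2 := by norm_num
            _ ≤ 2*(k-1)*g := Nat.mul_le_mul (Nat.mul_le_mul_left 2 h1) hg
        have hmcast : ((2*(k-1)*g - 1 : ℕ):ℝ) = 2*((k:ℝ)-1)*g - 1 := by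
          push_cast [Nat.cast_sub (by omega : 1 ≤ 2*(k-1)*g), Nat.cast_sub (by omega : 1 ≤ k)]
          ring
        have hν : ((2*(k-1)*g - 1 : ℕ):ℝ) ≤ (n:ℝ) * x := by
          rw [hmcast]
          nlinarith [hkey, hgr]
        have hb : F k ≤ Real.pi/2 * sideLobeBound (2*(k-1)*g - 1) :=
          Dk_le_sideLobe hnpos hx0 hkc (by omega) hν
        have htn : (2 * (((k:ℕ):ℤ) - 1)).toNat * g - 1 = 2*(k-1)*g - 1 := by
          have : (2 * (((k:ℕ):ℤ) - 1)).toNat = 2*(k-1) := by omega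
          rw [this]
        have hNx_half : (n:ℝ)*x ≤ (n:ℝ)/2 := by
          nlinarith [mul_le_mul_of_nonneg_left hkc hN.le]
        refine ⟨by rw [htn]; exact hb, hJmem _ (by omega) ?_⟩
        have hcomb : (4*(k:ℝ) - 2)*g ≤ (n:ℝ) := by linarith [le_trans hkey hNx_half]
        push_cast
        nlinarith [hcomb, hgr]

      have hsum2 : ∑ k ∈ (M.erase 0).erase 1, F k ≤ Real.pi/2 * leakageU₂ n g := by
        calc ∑ k ∈ (M.erase 0).erase 1, F k
            ≤ ∑ k ∈ (M.erase 0).erase 1,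
                (Real.pi/2 * sideLobeBound ((2 * (((k:ℕ):ℤ) - 1)).toNat * g - 1)) :=
              Finset.sum_le_sum (fun k hk => (hterm k hk).1)
          _ = Real.pi/2 * ∑ k ∈ (M.erase 0).erase 1,
                sideLobeBound ((2 * (((k:ℕ):ℤ) - 1)).toNat * g - 1) := by
              rw [Finset.mul_sum]
          _ ≤ Real.pi/2 * leakageU₂ n g := by
              refine mul_le_mul_of_nonneg_left ?_ (by positivity)
              refine sum_sideLobe_le n g _ (fun k => ((k:ℕ):ℤ) - 1) ?_
                (fun k hk => (hterm k hk).2)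
              intro a _ b _ hab
              have hab2 : ((a:ℕ):ℤ) - 1 = ((b:ℕ):ℤ) - 1 := hab
              omega
      linarith
    rw [← hsplit]
    have : Real.pi * leakageU₂ n g = Real.pi/2 * leakageU₂ n g + Real.pi/2 * leakageU₂ n g := by
      ring
    linarith

lemma sum_Dk_shift {n T : ℕ} (hT : 0 < T) (v : ℝ) (c : ℤ) :
    ∑ j ∈ Finset.range T, ‖Dk n ((j:ℝ)/(T:ℝ) - v)‖
      = ∑ k ∈ Finset.range T, ‖Dk n ((k:ℝ)/(T:ℝ) - (v - (c:ℝ)/(T:ℝ)))‖ := by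
  have hTZ : (T:ℤ) ≠ 0 := by exact_mod_cast hT.ne'
  have hTZ0 : (0:ℤ) < T := by exact_mod_cast hT
  have hTr : (0:ℝ) < T := by exact_mod_cast hT
  refine Finset.sum_nbij' (i := fun j : ℕ => (((j:ℤ) - c) % T).toNat)
    (j := fun k : ℕ => (((k:ℤ) + c) % T).toNat) ?_ ?_ ?_ ?_ ?_
  · intro a _
    refine Finset.mem_range.mpr ?_
    have h1 := Int.emod_nonneg ((a:ℤ) - c) hTZ
    have h2 := Int.emod_lt_of_pos ((a:ℤ) - c) hTZ0
    omega
  · intro a _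
    refine Finset.mem_range.mpr ?_
    have h1 := Int.emod_nonneg ((a:ℤ) + c) hTZ
    have h2 := Int.emod_lt_of_pos ((a:ℤ) + c) hTZ0
    omega
  · intro a ha
    have haT := Finset.mem_range.mp ha
    have h1 := Int.emod_nonneg ((a:ℤ) - c) hTZ
    have e1 : ((((((a:ℤ) - c) % T).toNat : ℕ)):ℤ) = ((a:ℤ) - c) % T := Int.toNat_of_nonneg h1
    have e2 : (((((((a:ℤ) - c) % T).toNat : ℕ)):ℤ) + c) % T = (a:ℤ) := by
      rw [e1, Int.emod_add_emod]
      have : (a:ℤ) - c + c = a := by ring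
      rw [this]
      exact Int.emod_eq_of_lt (by positivity) (by exact_mod_cast haT)
    simp only [e2]
    simp
  · intro a ha
    have haT := Finset.mem_range.mp ha
    have h1 := Int.emod_nonneg ((a:ℤ) + c) hTZ
    have e1 : ((((((a:ℤ) + c) % T).toNat : ℕ)):ℤ) = ((a:ℤ) + c) % T := Int.toNat_of_nonneg h1
    have e2 : (((((((a:ℤ) + c) % T).toNat : ℕ)):ℤ) - c) % T = (a:ℤ) := by
      rw [e1]
      have h3 : ((a:ℤ) + c) % T - c = ((a:ℤ) + c) % T + (-c) := by ring
      rw [h3, Int.emod_add_emod]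
      have : (a:ℤ) + c + -c = a := by ring
      rw [this]
      exact Int.emod_eq_of_lt (by positivity) (by exact_mod_cast haT)
    simp only [e2]
    simp
  · intro a _
    set q : ℤ := ((a:ℤ) - c) / T with hq
    have hmod : ((a:ℤ) - c) % T = (a:ℤ) - c - T * q := Int.emod_def _ _
    have h1 := Int.emod_nonneg ((a:ℤ) - c) hTZ
    have hr : (((((a:ℤ) - c) % T).toNat : ℕ) : ℝ) = (a:ℝ) - c - T*q := by
      have e1 : ((((((a:ℤ) - c) % T).toNat : ℕ)):ℤ) = (a:ℤ) - c - T * q := by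
        rw [Int.toNat_of_nonneg h1]; exact hmod
      have := congrArg (fun z : ℤ => (z:ℝ)) e1
      push_cast at this
      exact_mod_cast this
    have harg : (((((a:ℤ) - c) % T).toNat : ℕ) : ℝ)/(T:ℝ) - (v - (c:ℝ)/(T:ℝ))
        = ((a:ℝ)/(T:ℝ) - v) + ((-q : ℤ):ℝ) := by
      rw [hr]
      push_cast
      field_simp
      ring
    rw [harg, Dk_add_int]

lemma sum_Dk_refl {n T : ℕ} (hT : 0 < T) (s : ℝ) :
    ∑ k ∈ Finset.range T, ‖Dk n ((k:ℝ)/(T:ℝ) - s)‖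
      = ∑ k ∈ Finset.range T, ‖Dk n ((k:ℝ)/(T:ℝ) + s)‖ := by
  refine Finset.sum_nbij' (i := fun k : ℕ => (T - k) % T)
    (j := fun k : ℕ => (T - k) % T) ?_ ?_ ?_ ?_ ?_
  · intro a _; exact Finset.mem_range.mpr (Nat.mod_lt _ hT)
  · intro a _; exact Finset.mem_range.mpr (Nat.mod_lt _ hT)
  · intro a ha
    have haT := Finset.mem_range.mp ha
    rcases Nat.eq_zero_or_pos a with rfl | hpos
    · simp [Nat.mod_self]
    · have h1 : (T - a) % T = T - a := Nat.mod_eq_of_lt (by omega)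
      rw [h1]
      have h2 : (T - (T - a)) % T = a % T := by congr 1; omega
      rw [h2, Nat.mod_eq_of_lt haT]
  · intro a ha
    have haT := Finset.mem_range.mp ha
    rcases Nat.eq_zero_or_pos a with rfl | hpos
    · simp [Nat.mod_self]
    · have h1 : (T - a) % T = T - a := Nat.mod_eq_of_lt (by omega)
      rw [h1]
      have h2 : (T - (T - a)) % T = a % T := by congr 1; omega
      rw [h2, Nat.mod_eq_of_lt haT]
  · intro a ha
    have haT := Finset.mem_range.mp ha
    have hTr : (0:ℝ) < T := by exact_mod_cast hT
    rcases Nat.eq_zero_or_pos a with rfl | hpos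
    · simp only [Nat.sub_zero, Nat.mod_self]
      have e1 : ((0:ℕ):ℝ)/(T:ℝ) - s = -(((0:ℕ):ℝ)/(T:ℝ) + s) := by
        push_cast
        rw [zero_div]
        ring
      rw [e1, abs_Dk_neg]
    · have h1 : (T - a) % T = T - a := Nat.mod_eq_of_lt (by omega)
      rw [h1]
      have hcast : ((T - a : ℕ):ℝ) = (T:ℝ) - a := by
        push_cast [Nat.cast_sub haT.le]
        ring
      have e1 : ((T - a : ℕ):ℝ)/(T:ℝ) + s = -((a:ℝ)/(T:ℝ) - s) + ((1:ℤ):ℝ) := by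
        rw [hcast]
        push_cast
        field_simp
        ring
      have e2 : Dk n (((T - a : ℕ):ℝ)/(T:ℝ) + s) = Dk n (-((a:ℝ)/(T:ℝ) - s)) := by
        rw [e1, Dk_add_int]
      rw [e2, abs_Dk_neg]

lemma mdft_eq {n T : ℕ} (b : ℕ → ℂ) (μ : ℕ → ℂ)
    (hμ : ∀ t, μ t = ∑ j ∈ Finset.range T,
        b j * Complex.exp (2 * Real.pi * Complex.I * j * t / T)) (v : ℝ) :
    (1 / (n : ℂ)) * ∑ t ∈ Finset.range n, μ (t+1) *
        Complex.exp (-(2 * Real.pi * Complex.I * v * ((t:ℕ) + 1)))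
      = ∑ j ∈ Finset.range T, b j * Dk n ((j:ℝ)/(T:ℝ) - v) := by
  unfold Dk
  have key : ∀ t ∈ Finset.range n, μ (t+1) *
      Complex.exp (-(2 * Real.pi * Complex.I * v * ((t:ℕ) + 1)))
      = ∑ j ∈ Finset.range T, b j *
          Complex.exp (2 * Real.pi * Complex.I * (((j:ℝ)/(T:ℝ) - v) : ℝ) * ((t:ℕ) + 1)) := by
    intro t _
    rw [hμ (t+1), Finset.sum_mul]
    refine Finset.sum_congr rfl fun j _ => ?_
    rw [mul_assoc, ← Complex.exp_add]
    congr 1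
    push_cast
    ring
  rw [Finset.sum_congr rfl key, Finset.sum_comm, Finset.mul_sum]
  refine Finset.sum_congr rfl fun j _ => ?_
  rw [Finset.mul_sum, Finset.mul_sum, Finset.mul_sum]
  refine Finset.sum_congr rfl fun t _ => ?_
  ring

end PSUB

set_option linter.unusedVariables false in
/-- Pointwise on the underlying probability space,
`sup_{v∈[0,1/2]} |ỹ(v)| ≤ max{πU₁, πU₂ + 1} B + sup_{v∈[0,1/2]} |ε̃(v)|`. -/
theorem periodogram_sup_upper_bound
    {Ω : Type*} [MeasureSpace Ω] (hP : IsProbabilityMeasure (ℙ : Measure Ω))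
    (n : ℕ) (hn : 0 < n) (σ : ℝ) (hσ : 0 < σ)
    (ε : Fin n → Ω → ℝ)
    (hmeas : ∀ t, Measurable (ε t))
    (hindep : iIndepFun ε ℙ)
    (hsubg : ∀ t (l : ℝ), ∫ ω, Real.exp (l * ε t ω) ∂ℙ ≤ Real.exp (σ ^ 2 * l ^ 2 / 2))
    (εdft : ℝ → Ω → ℂ)
    (hεdft : ∀ v ω, εdft v ω = (1 / (n : ℂ)) *
        ∑ t : Fin n, (ε t ω : ℂ) * Complex.exp (-(2 * Real.pi * Complex.I * v * ((t : ℕ) + 1))))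
    (g T : ℕ) (hg2 : 2 ≤ g) (hgn : Real.sqrt n ≤ g)
    (hT : 0 < T) (hTn : (T : ℝ) < n / (2 * g))
    (b : ℕ → ℂ)
    (hb0 : (b 0).im = 0)
    (hbconj : ∀ j, 1 ≤ j → j ≤ T - 1 → b j = starRingEnd ℂ (b (T - j)))
    (hbne : ∃ j < T, b j ≠ 0)
    (μ : ℕ → ℂ)
    (hμ : ∀ t, μ t = ∑ j ∈ Finset.range T,
        b j * Complex.exp (2 * Real.pi * Complex.I * j * t / T))
    (ydft : ℝ → Ω → ℂ)
    (hydft : ∀ v ω, ydft v ω = (1 / (n : ℂ)) *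
        ∑ t : Fin n, (μ ((t : ℕ) + 1) + (ε t ω : ℂ)) *
          Complex.exp (-(2 * Real.pi * Complex.I * v * ((t : ℕ) + 1))))
    (B : ℝ) (hB : IsGreatest {x : ℝ | ∃ j < T, b j ≠ 0 ∧ x = ‖b j‖} B) :
    ∀ ω : Ω, (⨆ v ∈ Set.Icc (0 : ℝ) (1 / 2), ‖ydft v ω‖) ≤
        max (Real.pi * leakageU₁ n g) (Real.pi * leakageU₂ n g + 1) * B +
          ⨆ v ∈ Set.Icc (0 : ℝ) (1 / 2), ‖εdft v ω‖ := by
  intro ω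
  have hπ := Real.pi_pos
  have hnR : (0:ℝ) < n := by exact_mod_cast hn
  have hTr : (0:ℝ) < T := by exact_mod_cast hT
  have hgR : (0:ℝ) < g := by
    have : (2:ℝ) ≤ g := by exact_mod_cast hg2
    linarith
  have hgT : 2 * g * T + 1 ≤ n := by
    have h1 : (T:ℝ) * (2*g) < n := (lt_div_iff₀ (by positivity)).mp hTn
    have h2 : ((2*g*T : ℕ):ℝ) < ((n:ℕ):ℝ) := by push_cast; nlinarith
    have h3 : 2*g*T < n := by exact_mod_cast h2
    omega
  set C : ℝ := max (Real.pi * leakageU₁ n g) (Real.pi * leakageU₂ n g + 1) with hC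
  have hU2 : 0 ≤ leakageU₂ n g := Finset.sum_nonneg fun j _ => PSUB.sideLobe_nonneg _
  have hCge : Real.pi * leakageU₂ n g + 1 ≤ C := le_max_right _ _
  have hC0 : 0 ≤ C := le_trans (by nlinarith) hCge
  obtain ⟨hBmem, hBub⟩ := hB
  obtain ⟨j₀, hj₀T, hj₀ne, hj₀eq⟩ := hBmem
  have hB0 : 0 ≤ B := by rw [hj₀eq]; exact norm_nonneg _
  have hble : ∀ j, j < T → ‖b j‖ ≤ B := by
    intro j hj
    by_cases hbj : b j = 0
    · rw [hbj]
      simpa using hB0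
    · exact hBub ⟨j, hj, hbj, rfl⟩
  have hεbd : ∀ v : ℝ, ‖εdft v ω‖ ≤ (1/(n:ℝ)) * ∑ t : Fin n, |ε t ω| := by
    intro v
    rw [hεdft, norm_mul]
    have h1 : ‖1/(n:ℂ)‖ = 1/(n:ℝ) := by
      rw [norm_div]; simp
    rw [h1]
    refine mul_le_mul_of_nonneg_left ?_ (by positivity)
    refine le_trans (norm_sum_le _ _) ?_
    refine Finset.sum_le_sum fun t _ => ?_
    rw [norm_mul]
    have h2 : ‖Complex.exp (-(2 * Real.pi * Complex.I * v * (((t:ℕ):ℂ) + 1)))‖ = 1 := by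
      have e : (-(2 * (Real.pi:ℂ) * Complex.I * v * (((t:ℕ):ℂ) + 1)))
          = ((-(2 * Real.pi * v * ((t:ℕ) + 1)) : ℝ) : ℂ) * Complex.I := by push_cast; ring
      rw [e, Complex.norm_exp_ofReal_mul_I]
    rw [h2, mul_one, Complex.norm_real, Real.norm_eq_abs]
  set Mb : ℝ := (1/(n:ℝ)) * ∑ t : Fin n, |ε t ω| with hMb
  have hMb0 : 0 ≤ Mb := by positivity
  have hbdd : BddAbove (Set.range fun v : ℝ =>
      ⨆ _ : v ∈ Set.Icc (0:ℝ) (1/2), ‖εdft v ω‖) := by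
    refine ⟨Mb, ?_⟩
    rintro y ⟨v, rfl⟩
    exact Real.iSup_le (fun _ => hεbd v) hMb0
  set Sb : ℝ := ⨆ v ∈ Set.Icc (0:ℝ) (1/2), ‖εdft v ω‖ with hSb
  have hSb0 : 0 ≤ Sb := Real.iSup_nonneg fun v => Real.iSup_nonneg fun _ => norm_nonneg _
  have hkey : ∀ v : ℝ, v ∈ Set.Icc (0:ℝ) (1/2) → ‖ydft v ω‖ ≤ C * B + Sb := by
    intro v hv
    have hμsum : ∑ t : Fin n, μ ((t:ℕ)+1) *
          Complex.exp (-(2 * Real.pi * Complex.I * v * (((t:ℕ):ℂ) + 1)))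
        = ∑ t ∈ Finset.range n, μ (t+1) *
          Complex.exp (-(2 * Real.pi * Complex.I * v * (((t:ℕ):ℂ) + 1))) :=
      Fin.sum_univ_eq_sum_range
        (fun t : ℕ => μ (t+1) * Complex.exp (-(2 * Real.pi * Complex.I * v * (((t:ℕ):ℂ) + 1)))) n
    have hdec : ydft v ω
        = (∑ j ∈ Finset.range T, b j * PSUB.Dk n ((j:ℝ)/(T:ℝ) - v)) + εdft v ω := by
      rw [hydft, hεdft, ← PSUB.mdft_eq b μ hμ v, ← hμsum, ← mul_add, ← Finset.sum_add_distrib]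
      refine congrArg _ (Finset.sum_congr rfl fun t _ => by ring)
    have hDsum : ∑ j ∈ Finset.range T, ‖PSUB.Dk n ((j:ℝ)/(T:ℝ) - v)‖
        ≤ Real.pi * leakageU₂ n g + 1 := by
      set c : ℤ := round (v * T) with hc
      have habs : |v - (c:ℝ)/T| ≤ 1/(2*(T:ℝ)) := by
        have h1 := abs_sub_round (v * T)
        have e : v - (c:ℝ)/T = (v*T - c)/T := by field_simp
        rw [e, abs_div, abs_of_pos hTr, div_le_div_iff₀ hTr (by positivity)]
        nlinarith
      rw [PSUB.sum_Dk_shift hT v c]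
      set s₀ : ℝ := v - (c:ℝ)/T with hs0def
      rcases le_or_gt 0 s₀ with hpos | hneg
      · refine PSUB.sum_Dk_le hg2 hT hgT hpos ?_
        rw [_root_.abs_of_nonneg hpos] at habs
        exact habs
      · calc ∑ k ∈ Finset.range T, ‖PSUB.Dk n ((k:ℝ)/(T:ℝ) - s₀)‖
            = ∑ k ∈ Finset.range T, ‖PSUB.Dk n ((k:ℝ)/(T:ℝ) + (-s₀))‖ := by
              refine Finset.sum_congr rfl fun k _ => ?_
              rw [show (k:ℝ)/(T:ℝ) - s₀ = (k:ℝ)/(T:ℝ) + (-s₀) by ring]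
          _ = ∑ k ∈ Finset.range T, ‖PSUB.Dk n ((k:ℝ)/(T:ℝ) - (-s₀))‖ :=
              (PSUB.sum_Dk_refl hT (-s₀)).symm
          _ ≤ Real.pi * leakageU₂ n g + 1 := by
              refine PSUB.sum_Dk_le hg2 hT hgT (by linarith) ?_
              rw [_root_.abs_of_neg hneg] at habs
              exact habs
    have hdet : ‖∑ j ∈ Finset.range T, b j * PSUB.Dk n ((j:ℝ)/(T:ℝ) - v)‖
        ≤ C * B := by
      refine le_trans (norm_sum_le _ _) ?_
      have h1 : ∀ j ∈ Finset.range T,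
          ‖b j * PSUB.Dk n ((j:ℝ)/(T:ℝ) - v)‖
            ≤ B * ‖PSUB.Dk n ((j:ℝ)/(T:ℝ) - v)‖ := by
        intro j hj
        rw [norm_mul]
        exact mul_le_mul_of_nonneg_right (hble j (Finset.mem_range.mp hj))
          (norm_nonneg _)
      refine le_trans (Finset.sum_le_sum h1) ?_
      rw [← Finset.mul_sum]
      calc B * ∑ j ∈ Finset.range T, ‖PSUB.Dk n ((j:ℝ)/(T:ℝ) - v)‖
          ≤ B * (Real.pi * leakageU₂ n g + 1) := mul_le_mul_of_nonneg_left hDsum hB0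
        _ ≤ B * C := mul_le_mul_of_nonneg_left hCge hB0
        _ = C * B := mul_comm _ _
    have hεle : ‖εdft v ω‖ ≤ Sb := by
      rw [hSb]
      refine le_trans (le_of_eq (ciSup_pos (f := fun _ => ‖εdft v ω‖) hv).symm) ?_
      exact le_ciSup hbdd v
    calc ‖ydft v ω‖
        ≤ ‖∑ j ∈ Finset.range T, b j * PSUB.Dk n ((j:ℝ)/(T:ℝ) - v)‖
            + ‖εdft v ω‖ := by
          rw [hdec]; exact norm_add_le _ _
      _ ≤ C * B + Sb := add_le_add hdet hεle
  refine Real.iSup_le (fun v => ?_) (by positivity)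
  exact Real.iSup_le (fun hv => hkey v hv) (by positivity)
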